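/- Let G be a labeled block graph, let B' be a support block of G, let c_i ∈ C\{c_h} be a cut vertex of B', let B_{ij} be an end block of G whose unique cut vertex is c_i, and let s_max = max{ s(v) : v ∈ V(B_{ij})\{c_i} }. Then γ(G) = γ(G'), where G' is the labeled block graph obtained from G by relabelling max{s_max − |r(V(B_{ij}))|, 0} vertices of B_{ij} that have t-label B as R, with priority given to c_i, and keeping every other label the same. -/

import Mathlib

open SimpleGraph
open scoped Classical

/-- The two possible t-labels of a vertex of a labeled block graph. -/
inductive TLabel
  | B
  | R
deriving DecidableEq

/-- A labeled graph: a graph together with labels `M_V(v) = (t v, s v)` on vertices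
and `k e` on (potential) edges. -/
structure LBG (V : Type*) where
  graph : SimpleGraph V
  t : V → TLabel
  s : V → ℕ
  k : Sym2 V → ℕ

variable {V : Type*}

/-- closed neighbourhood `N_G[v]` -/
def cN (G : SimpleGraph V) (v : V) : Set V := insert v {u | G.Adj v u}

/-- open neighbourhood `N_G(v)` -/
def oN (G : SimpleGraph V) (v : V) : Set V := {u | G.Adj v u}

/-- closed neighbourhood `N_G[e]` of an edge -/
def eN (G : SimpleGraph V) (e : Sym2 V) : Set V := {w | ∃ x ∈ e, w ∈ cN G x}

/-- `r(S)`: the vertices of `S` with t-label `R`. -/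
def rSet (H : LBG V) (S : Set V) : Set V := {v | v ∈ S ∧ H.t v = TLabel.R}

/-- An `M_{LVE}`-dominating set of a labeled graph. -/
def IsMLVE (H : LBG V) (L : Set V) : Prop :=
  (∀ v, H.t v = TLabel.R → v ∈ L) ∧
  (∀ v, H.s v ≤ (cN H.graph v ∩ L).ncard) ∧
  (∀ e ∈ H.graph.edgeSet, H.k e ≤ (eN H.graph e ∩ L).ncard) ∧
  (∀ e ∈ H.graph.edgeSet, ∀ f ∈ H.graph.edgeSet, e ≠ f →
    H.k e + H.k f - 1 ≤ ((eN H.graph e ∪ eN H.graph f) ∩ L).ncard)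

/-- `γ(G)`: the minimum cardinality of an `M_{LVE}`-dominating set. -/
noncomputable def gam (H : LBG V) : ℕ :=
  sInf {n | ∃ L : Set V, IsMLVE H L ∧ L.ncard = n}

/-- A liar's vertex-edge dominating set. -/
def IsLiarVE (G : SimpleGraph V) (L : Set V) : Prop :=
  (∀ e ∈ G.edgeSet, 2 ≤ (eN G e ∩ L).ncard) ∧
  (∀ e ∈ G.edgeSet, ∀ f ∈ G.edgeSet, e ≠ f → 3 ≤ ((eN G e ∪ eN G f) ∩ L).ncard)

/-- `v` is a cut vertex of `G`: removing it disconnects two vertices that were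
connected in `G`. -/
def IsCutVertex (G : SimpleGraph V) (v : V) : Prop :=
  ∃ x y : {u : V // u ≠ v}, G.Reachable x.1 y.1 ∧
    ¬ (G.induce {u : V | u ≠ v}).Reachable ⟨x.1, x.2⟩ ⟨y.1, y.2⟩

/-- A vertex set inducing a connected subgraph without a cut vertex. -/
def GoodSet (G : SimpleGraph V) (Bs : Set V) : Prop :=
  (G.induce Bs).Connected ∧ ∀ v, ¬ IsCutVertex (G.induce Bs) v

/-- A block of `G`: a maximal connected subgraph without a cut vertex. -/
def IsBlock (G : SimpleGraph V) (Bs : Set V) : Prop :=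
  GoodSet G Bs ∧ ∀ Bs' : Set V, Bs ⊆ Bs' → GoodSet G Bs' → Bs' = Bs

/-- A block graph: every block is a clique. -/
def IsBlockGraph (G : SimpleGraph V) : Prop :=
  ∀ Bs : Set V, IsBlock G Bs → G.IsClique Bs

/-- `Bs` is an end block of `G` whose unique cut vertex is `c`. -/
def EndBlockWith (G : SimpleGraph V) (Bs : Set V) (c : V) : Prop :=
  IsBlock G Bs ∧ c ∈ Bs ∧ IsCutVertex G c ∧ ∀ c' ∈ Bs, IsCutVertex G c' → c' = c

/-- The cut-tree of `G`: vertices are the blocks and the cut vertices of `G`,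
with an edge joining a block to each cut vertex it contains. -/
def cutTree (G : SimpleGraph V) :
    SimpleGraph ({Bs : Set V // IsBlock G Bs} ⊕ {v : V // IsCutVertex G v}) :=
  SimpleGraph.fromRel (fun a b =>
    match a, b with
    | Sum.inl Bs, Sum.inr c => (c : V) ∈ (Bs : Set V)
    | _, _ => False)

/-- Distance to the root `ρ` (a cut vertex) in the cut-tree. -/
noncomputable def rootDist (G : SimpleGraph V) (ρ : {v : V // IsCutVertex G v})
    (x : {Bs : Set V // IsBlock G Bs} ⊕ {v : V // IsCutVertex G v}) : ℕ :=
  (cutTree G).dist x (Sum.inr ρ)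

/-- `Bi` is a descendant block of `Bj` in the cut-tree rooted at `ρ`:
`Bj` is the parent of the parent of `Bi`. -/
def IsDescBlock (G : SimpleGraph V) (ρ : {v : V // IsCutVertex G v})
    (Bj Bi : {Bs : Set V // IsBlock G Bs}) : Prop :=
  ∃ c : {v : V // IsCutVertex G v}, (c : V) ∈ (Bi : Set V) ∧ (c : V) ∈ (Bj : Set V) ∧
    rootDist G ρ (Sum.inr c) + 1 = rootDist G ρ (Sum.inl Bi) ∧
    rootDist G ρ (Sum.inl Bj) + 1 = rootDist G ρ (Sum.inr c)

/-- A support block: all of its descendant blocks are end blocks of `G`. -/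
def IsSupportBlock (G : SimpleGraph V) (ρ : {v : V // IsCutVertex G v})
    (B' : {Bs : Set V // IsBlock G Bs}) : Prop :=
  ∀ Bi, IsDescBlock G ρ B' Bi → ∃ c : V, EndBlockWith G (Bi : Set V) c

/-- The edges of (the subgraph induced by) a block `Bs`. -/
def blockEdges (G : SimpleGraph V) (Bs : Set V) : Set (Sym2 V) :=
  {e | e ∈ G.edgeSet ∧ ∀ x ∈ e, x ∈ Bs}

/-- Relabel all vertices of `A` with t-label `R`, keeping every other label the same. -/
noncomputable def relabelR (H : LBG V) (A : Set V) : LBG V :=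
  { H with t := fun v => if v ∈ A then TLabel.R else H.t v }

/-- `l_2(c)`: the number of edges of the end blocks whose unique cut vertex is `c`
that are incident to `c` and have k-label `2`. -/
noncomputable def l2cut (H : LBG V) (c : V) : ℕ :=
  ({e : Sym2 V | (∃ Bs : Set V, EndBlockWith H.graph Bs c ∧ e ∈ blockEdges H.graph Bs) ∧
     c ∈ e ∧ H.k e = 2}).ncard

section walks
variable {W : Type*}

lemma reach_induce_of_walk (K : SimpleGraph W) (S : Set W) {x y : W}
    (p : K.Walk x y) (hp : ∀ z ∈ p.support, z ∈ S) (hx : x ∈ S) (hy : y ∈ S) :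
    (K.induce S).Reachable ⟨x, hx⟩ ⟨y, hy⟩ := by
  induction p with
  | nil => exact Reachable.refl _
  | @cons a b c h q ih =>
      have hb : b ∈ S := hp b (by simp [SimpleGraph.Walk.support_cons])
      have hq : ∀ z ∈ q.support, z ∈ S := fun z hz => hp z (by simp [SimpleGraph.Walk.support_cons, hz])
      have hadj : (K.induce S).Adj ⟨a, hx⟩ ⟨b, hb⟩ := by
        simpa [SimpleGraph.induce] using h
      exact (hadj.reachable).trans (ih hq hb hy)

lemma reach_induce2_of_walk (K : SimpleGraph W) (S : Set W) (w : ↥S) {x y : W}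
    (p : K.Walk x y) (hp : ∀ z ∈ p.support, z ∈ S ∧ z ≠ (w : W))
    (hx : x ∈ S) (hy : y ∈ S) (hxw : x ≠ (w : W)) (hyw : y ≠ (w : W)) :
    ((K.induce S).induce {u : ↥S | u ≠ w}).Reachable
      ⟨⟨x, hx⟩, fun h => hxw (congrArg Subtype.val h)⟩
      ⟨⟨y, hy⟩, fun h => hyw (congrArg Subtype.val h)⟩ := by
  induction p with
  | nil => exact Reachable.refl _
  | @cons a b c h q ih =>
      have hb : b ∈ S ∧ b ≠ (w : W) := hp b (by simp [SimpleGraph.Walk.support_cons])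
      have hq : ∀ z ∈ q.support, z ∈ S ∧ z ≠ (w : W) :=
        fun z hz => hp z (by simp [SimpleGraph.Walk.support_cons, hz])
      have hadj : ((K.induce S).induce {u : ↥S | u ≠ w}).Adj
          ⟨⟨a, hx⟩, fun h' => hxw (congrArg Subtype.val h')⟩
          ⟨⟨b, hb.1⟩, fun h' => hb.2 (congrArg Subtype.val h')⟩ := by
        simpa [SimpleGraph.induce] using h
      exact (hadj.reachable).trans (ih hq hb.1 hy hb.2 hyw)

lemma walk_down (K : SimpleGraph W) (S : Set W) :
    ∀ {a b : ↥S} (_q : (K.induce S).Walk a b),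
      ∃ p : K.Walk a.val b.val, ∀ z ∈ p.support, z ∈ S := by
  intro a b q
  induction q with
  | nil => exact ⟨Walk.nil, by simp [Subtype.coe_prop]⟩
  | @cons a b c h q ih =>
      obtain ⟨p, hp⟩ := ih
      have hh : K.Adj a.val b.val := by simpa [SimpleGraph.induce] using h
      refine ⟨Walk.cons hh p, ?_⟩
      intro z hz
      rw [Walk.support_cons] at hz
      rcases List.mem_cons.mp hz with h1 | h2
      · exact h1 ▸ a.2
      · exact hp z h2

lemma path_split {K : SimpleGraph W} [DecidableEq W] {a b : W} {p : K.Walk a b}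
    (hp : p.IsPath) {z wv : W} (hz : z ∈ p.support) (hne : wv ≠ z) :
    wv ∉ (p.takeUntil z hz).support ∨ wv ∉ (p.dropUntil z hz).support := by
  by_contra hcon
  push_neg at hcon
  obtain ⟨h1, h2⟩ := hcon
  have hnd : p.support.Nodup := hp.support_nodup
  rw [← p.take_spec hz, Walk.support_append] at hnd
  have hd := (List.nodup_append'.mp hnd).2.2
  have h2' : wv ∈ (p.dropUntil z hz).support.tail := by
    rw [(p.dropUntil z hz).support_eq_cons] at h2
    rcases List.mem_cons.mp h2 with h | h
    · exact absurd h hne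
    · exact h
  exact hd h1 h2'

end walks

/-- Key lemma: a non-cut vertex of an end block has all its neighbours inside the block. -/
lemma endblock_closed [DecidableEq V] {G : SimpleGraph V} (hBG : IsBlockGraph G)
    {Bij : Set V} {ci : V} (hEnd : EndBlockWith G Bij ci)
    {v : V} (hv : v ∈ Bij) (hvci : v ≠ ci) {u : V} (hadj : G.Adj v u) : u ∈ Bij := by
  by_contra hu
  have hclique : G.IsClique Bij := hBG Bij hEnd.1
  have hci : ci ∈ Bij := hEnd.2.1
  have hvc : G.Adj v ci := hclique hv hci hvci
  have hnc : ¬ IsCutVertex G v := fun h => hvci (hEnd.2.2.2 v hv h)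
  have huv : u ≠ v := fun h => (h ▸ hadj).ne' rfl
  have hciv : ci ≠ v := Ne.symm hvci
  -- reachability avoiding v
  have hre : (G.induce {w : V | w ≠ v}).Reachable ⟨u, huv⟩ ⟨ci, hciv⟩ := by
    by_contra hcon
    exact hnc ⟨⟨u, huv⟩, ⟨ci, hciv⟩, (hadj.symm.reachable).trans hvc.reachable, hcon⟩
  obtain ⟨q⟩ := hre
  obtain ⟨p0, hp0⟩ := walk_down G {w : V | w ≠ v} q
  set P : G.Walk u ci := p0.bypass with hPdef
  have hPpath : P.IsPath := p0.bypass_isPath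
  have hPsupp : ∀ z ∈ P.support, z ≠ v := fun z hz => hp0 z (p0.support_bypass_subset hz)
  set S : Set V := Bij ∪ {z | z ∈ P.support} with hSdef
  have hBS : Bij ⊆ S := Set.subset_union_left
  have hvS : v ∈ S := hBS hv
  have hciS : ci ∈ S := hBS hci
  have huS : u ∈ S := Or.inr P.start_mem_support
  -- helper: walks staying in S, avoiding wv, to a common anchor
  have key : ∀ (wv : V), ∃ anchor, anchor ∈ Bij ∧ anchor ≠ wv ∧
      ∀ z ∈ S, z ≠ wv → ∃ p : G.Walk z anchor, ∀ a ∈ p.support, a ∈ S ∧ a ≠ wv := by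
    intro wv
    by_cases hwv : wv = v
    · subst hwv
      refine ⟨ci, hci, hciv, ?_⟩
      intro z hzS hzwv
      rcases hzS with hzB | hzP
      · by_cases hzci : z = ci
        · subst hzci
          exact ⟨Walk.nil, by simp [hciS, hciv]⟩
        · refine ⟨Walk.cons (hclique hzB hci hzci) Walk.nil, ?_⟩
          intro a ha
          simp only [Walk.support_cons, Walk.support_nil, List.mem_cons,
            List.mem_singleton] at ha
          rcases ha with rfl | ha
          · exact ⟨hBS hzB, hzwv⟩
          · simp at ha
            subst ha
            exact ⟨hciS, hciv⟩
      · refine ⟨P.dropUntil z hzP, ?_⟩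
        intro a ha
        have haP : a ∈ P.support := Walk.support_dropUntil_subset _ _ ha
        exact ⟨Or.inr haP, hPsupp a haP⟩
    · refine ⟨v, hv, fun h => hwv h.symm, ?_⟩
      have hvwv : v ≠ wv := fun h => hwv h.symm
      intro z hzS hzwv
      rcases hzS with hzB | hzP
      · by_cases hzv : z = v
        · subst hzv
          exact ⟨Walk.nil, by simp [hvS, hvwv]⟩
        · refine ⟨Walk.cons (hclique hzB hv hzv) Walk.nil, ?_⟩
          intro a ha
          simp only [Walk.support_cons, Walk.support_nil, List.mem_cons,
            List.mem_singleton] at ha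
          rcases ha with rfl | ha
          · exact ⟨hBS hzB, hzwv⟩
          · simp at ha
            subst ha
            exact ⟨hvS, hvwv⟩
      · by_cases hwd : wv ∈ (P.dropUntil z hzP).support
        · -- route z → u → v via takeUntil reversed
          have h1 : wv ∉ (P.takeUntil z hzP).support := by
            rcases path_split hPpath hzP (Ne.symm hzwv) with h | h
            · exact h
            · exact absurd hwd h
          refine ⟨((P.takeUntil z hzP).reverse).append (Walk.cons hadj.symm Walk.nil), ?_⟩
          intro a ha
          rw [Walk.support_append] at ha
          rcases List.mem_append.mp ha with ha | ha
          · rw [Walk.support_reverse, List.mem_reverse] at ha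
            have haP : a ∈ P.support := Walk.support_takeUntil_subset _ _ ha
            exact ⟨Or.inr haP, fun h => h1 (h ▸ ha)⟩
          · simp only [Walk.support_cons, Walk.support_nil, List.tail_cons,
              List.mem_singleton] at ha
            subst ha
            exact ⟨hvS, hvwv⟩
        · -- route z → ci → v via dropUntil
          refine ⟨(P.dropUntil z hzP).append (Walk.cons hvc.symm Walk.nil), ?_⟩
          intro a ha
          rw [Walk.support_append] at ha
          rcases List.mem_append.mp ha with ha | ha
          · have haP : a ∈ P.support := Walk.support_dropUntil_subset _ _ ha
            exact ⟨Or.inr haP, fun h => hwd (h ▸ ha)⟩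
          · simp only [Walk.support_cons, Walk.support_nil, List.tail_cons,
              List.mem_singleton] at ha
            subst ha
            exact ⟨hvS, hvwv⟩
  -- every z in S reaches v within S
  have reachv : ∀ z ∈ S, ∃ p : G.Walk z v, ∀ a ∈ p.support, a ∈ S := by
    intro z hzS
    rcases hzS with hzB | hzP
    · by_cases hzv : z = v
      · subst hzv; exact ⟨Walk.nil, by simp [hvS]⟩
      · refine ⟨Walk.cons (hclique hzB hv hzv) Walk.nil, ?_⟩
        intro a ha
        simp only [Walk.support_cons, Walk.support_nil, List.mem_cons,
          List.mem_singleton] at ha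
        rcases ha with rfl | ha
        · exact hBS hzB
        · simp at ha; subst ha; exact hvS
    · refine ⟨(P.dropUntil z hzP).append (Walk.cons hvc.symm Walk.nil), ?_⟩
      intro a ha
      rw [Walk.support_append] at ha
      rcases List.mem_append.mp ha with ha | ha
      · exact Or.inr (Walk.support_dropUntil_subset _ _ ha)
      · simp only [Walk.support_cons, Walk.support_nil, List.tail_cons,
          List.mem_singleton] at ha
        subst ha; exact hvS
  have hconn : (G.induce S).Connected := by
    rw [connected_iff]
    refine ⟨?_, ⟨⟨v, hvS⟩⟩⟩
    intro a b
    obtain ⟨pa, hpa⟩ := reachv a.val a.2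
    obtain ⟨pb, hpb⟩ := reachv b.val b.2
    exact (reach_induce_of_walk G S pa hpa a.2 hvS).trans
      (reach_induce_of_walk G S pb hpb b.2 hvS).symm
  have hnocut : ∀ w, ¬ IsCutVertex (G.induce S) w := by
    intro w hcut
    obtain ⟨x, y, hrxy, hnr⟩ := hcut
    obtain ⟨anchor, hancB, hancw, hkey⟩ := key w.val
    have hxne : x.1.val ≠ w.val := fun h => x.2 (Subtype.ext h)
    have hyne : y.1.val ≠ w.val := fun h => y.2 (Subtype.ext h)
    obtain ⟨px, hpx⟩ := hkey x.1.val x.1.2 hxne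
    obtain ⟨py, hpy⟩ := hkey y.1.val y.1.2 hyne
    have hfull : ∀ a ∈ (px.append py.reverse).support, a ∈ S ∧ a ≠ w.val := by
      intro a ha
      rw [Walk.support_append] at ha
      rcases List.mem_append.mp ha with ha | ha
      · exact hpx a ha
      · have := List.mem_of_mem_tail ha
        rw [Walk.support_reverse, List.mem_reverse] at this
        exact hpy a this
    exact hnr (reach_induce2_of_walk G S w (px.append py.reverse) hfull
      x.1.2 y.1.2 hxne hyne)
  have hSB : S = Bij := hEnd.1.2 S hBS ⟨hconn, hnocut⟩
  exact hu (hSB ▸ huS)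


theorem stmt_3
    {V : Type*} [Fintype V] [DecidableEq V]
    (H : LBG V)
    (hBG : IsBlockGraph H.graph)
    (hk : ∀ e : Sym2 V, H.k e ≤ 2)
    (ρ : {v : V // IsCutVertex H.graph v})
    (B' : {Bs : Set V // IsBlock H.graph Bs})
    (hsupp : IsSupportBlock H.graph ρ B')
    (ch : V) (hchCut : IsCutVertex H.graph ch) (hchB : ch ∈ (B' : Set V))
    (hchMin : ∀ (c : V) (hc : IsCutVertex H.graph c), c ∈ (B' : Set V) →
      rootDist H.graph ρ (Sum.inr ⟨ch, hchCut⟩) ≤ rootDist H.graph ρ (Sum.inr ⟨c, hc⟩))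
    (ci : V) (hciCut : IsCutVertex H.graph ci) (hciB : ci ∈ (B' : Set V)) (hcich : ci ≠ ch)
    (Bij : Set V) (hEnd : EndBlockWith H.graph Bij ci)
    (A : Set V)
    (hAsub : A ⊆ {v | v ∈ Bij ∧ H.t v = TLabel.B})
    (hAcard : A.ncard = sSup {n : ℕ | ∃ v, v ∈ Bij ∧ v ≠ ci ∧ H.s v = n} - (rSet H Bij).ncard)
    (hApri : H.t ci = TLabel.B → A.Nonempty → ci ∈ A) :
    gam H = gam (relabelR H A) := by
  classical
  have ht' : ∀ v, (relabelR H A).t v = if v ∈ A then TLabel.R else H.t v := fun _ => rfl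
  have hclique : H.graph.IsClique Bij := hBG Bij hEnd.1
  have hciB2 : ci ∈ Bij := hEnd.2.1
  have hF2 : ∀ v ∈ Bij, v ≠ ci → cN H.graph v = Bij := by
    intro v hv hvci
    ext z
    constructor
    · intro hz
      rcases Set.mem_insert_iff.mp hz with rfl | hz
      · exact hv
      · exact endblock_closed hBG hEnd hv hvci hz
    · intro hz
      by_cases hzv : z = v
      · exact hzv ▸ Set.mem_insert _ _
      · exact Set.mem_insert_iff.mpr (Or.inr (hclique hv hz (fun h => hzv h.symm)))
  have hcNci : Bij ⊆ cN H.graph ci := by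
    intro z hz
    by_cases hzc : z = ci
    · exact hzc ▸ Set.mem_insert _ _
    · exact Set.mem_insert_iff.mpr (Or.inr (hclique hciB2 hz (fun h => hzc h.symm)))
  have dichV : ∀ x : V, Bij ⊆ cN H.graph x ∨ cN H.graph x ∩ Bij ⊆ {ci} := by
    intro x
    by_cases hx : x ∈ Bij
    · by_cases hxc : x = ci
      · exact Or.inl (hxc ▸ hcNci)
      · exact Or.inl (le_of_eq (hF2 x hx hxc).symm)
    · right
      rintro z ⟨hz1, hz2⟩
      by_cases hzc : z = ci
      · exact Set.mem_singleton_iff.mpr hzc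
      · exfalso
        rcases Set.mem_insert_iff.mp hz1 with rfl | hadj
        · exact hx hz2
        · have hmem : x ∈ cN H.graph z := Set.mem_insert_iff.mpr (Or.inr hadj.symm)
          rw [hF2 z hz2 hzc] at hmem
          exact hx hmem
  have eN_pair : ∀ x y : V, eN H.graph s(x, y) = cN H.graph x ∪ cN H.graph y := by
    intro x y
    ext w
    simp only [eN, Set.mem_setOf_eq, Sym2.mem_iff, Set.mem_union]
    constructor
    · rintro ⟨a, (rfl | rfl), h⟩
      · exact Or.inl h
      · exact Or.inr h
    · rintro (h | h)
      · exact ⟨x, Or.inl rfl, h⟩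
      · exact ⟨y, Or.inr rfl, h⟩
  have dichE : ∀ e : Sym2 V, Bij ⊆ eN H.graph e ∨ eN H.graph e ∩ Bij ⊆ {ci} := by
    intro e
    induction e using Sym2.ind with
    | _ x y =>
      rw [eN_pair]
      rcases dichV x with hx | hx
      · exact Or.inl (hx.trans Set.subset_union_left)
      · rcases dichV y with hy | hy
        · exact Or.inl (hy.trans Set.subset_union_right)
        · right
          rintro z ⟨hz1 | hz1, hz2⟩
          · exact hx ⟨hz1, hz2⟩
          · exact hy ⟨hz1, hz2⟩
  have mono : ∀ L : Set V, IsMLVE (relabelR H A) L → IsMLVE H L := by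
    rintro L ⟨h1, h2, h3, h4⟩
    refine ⟨fun v hv => h1 v ?_, h2, h3, h4⟩
    rw [ht' v]
    split
    · rfl
    · exact hv
  by_cases hSH : {n | ∃ L : Set V, IsMLVE H L ∧ L.ncard = n}.Nonempty
  · obtain ⟨L, hL, hLcard⟩ := Nat.sInf_mem hSH
    have hsuff : ∃ L' : Set V, IsMLVE (relabelR H A) L' ∧ L'.ncard = L.ncard := by
      by_cases hAne : A.Nonempty
      · -- main case
        set SS : Set ℕ := {n : ℕ | ∃ v, v ∈ Bij ∧ v ≠ ci ∧ H.s v = n} with hSSdef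
        have hSSne : SS.Nonempty := by
          by_contra h
          rw [Set.not_nonempty_iff_eq_empty] at h
          rw [h] at hAcard
          simp only [csSup_empty, Nat.bot_eq_zero] at hAcard
          simp only [Nat.zero_sub] at hAcard
          exact (Set.nonempty_iff_ne_empty.mp hAne) ((Set.ncard_eq_zero (Set.toFinite _)).mp hAcard)
        have hSSbd : BddAbove SS := by
          have hsub : SS ⊆ H.s '' {v | v ∈ Bij ∧ v ≠ ci} := by
            rintro n ⟨v, h1, h2, h3⟩
            exact ⟨v, ⟨h1, h2⟩, h3⟩
          exact (((Set.toFinite _).image H.s).subset hsub).bddAbove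
        obtain ⟨v0, hv0B, hv0ci, hv0s⟩ := Nat.sSup_mem hSSne hSSbd
        have hrL : rSet H Bij ⊆ L := fun v hv => hL.1 v hv.2
        have hrB : rSet H Bij ⊆ Bij := fun v hv => hv.1
        have hAB : A ⊆ Bij := fun v hv => (hAsub hv).1
        have hrA : Disjoint (rSet H Bij) A := by
          rw [Set.disjoint_left]
          intro a ha haA
          exact absurd ((ha.2).symm.trans (hAsub haA).2) (by decide)
        have hsmaxr : (rSet H Bij).ncard < sSup SS := by
          by_contra h
          push_neg at h
          have hz : A.ncard = 0 := by rw [hAcard]; omega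
          exact (Set.nonempty_iff_ne_empty.mp hAne) ((Set.ncard_eq_zero (Set.toFinite _)).mp hz)
        have hAr : A.ncard + (rSet H Bij).ncard = sSup SS := by rw [hAcard]; omega
        have hLBij : sSup SS ≤ (L ∩ Bij).ncard := by
          have h2 := hL.2.1 v0
          rw [hF2 v0 hv0B hv0ci, Set.inter_comm] at h2
          rw [hv0s] at h2
          exact h2
        have hciRA : ci ∈ rSet H Bij ∪ A := by
          cases hct : H.t ci with
          | B => exact Or.inr (hApri hct hAne)
          | R => exact Or.inl ⟨hciB2, hct⟩
        have hbound : (A \ L).ncard ≤ ((L ∩ Bij) \ (rSet H Bij ∪ A)).ncard := by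
          have e1 : ((L ∩ Bij) ∩ (rSet H Bij ∪ A)).ncard
              + ((L ∩ Bij) \ (rSet H Bij ∪ A)).ncard = (L ∩ Bij).ncard :=
            Set.ncard_inter_add_ncard_diff_eq_ncard _ _ (Set.toFinite _)
          have e2 : (L ∩ Bij) ∩ (rSet H Bij ∪ A) = rSet H Bij ∪ (A ∩ L) := by
            ext x
            constructor
            · rintro ⟨⟨hxL, hxB⟩, hxr | hxA⟩
              · exact Or.inl hxr
              · exact Or.inr ⟨hxA, hxL⟩
            · rintro (hxr | ⟨hxA, hxL⟩)
              · exact ⟨⟨hrL hxr, hxr.1⟩, Or.inl hxr⟩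
              · exact ⟨⟨hxL, hAB hxA⟩, Or.inr hxA⟩
          have e3 : (rSet H Bij ∪ (A ∩ L)).ncard = (rSet H Bij).ncard + (A ∩ L).ncard :=
            Set.ncard_union_eq (hrA.mono_right Set.inter_subset_left)
              (Set.toFinite _) (Set.toFinite _)
          have e4 : (A ∩ L).ncard + (A \ L).ncard = A.ncard :=
            Set.ncard_inter_add_ncard_diff_eq_ncard _ _ (Set.toFinite _)
          rw [e2, e3] at e1
          omega
        obtain ⟨D, hDsub, hDcard⟩ := Set.exists_subset_card_eq hbound
        have hDL : D ⊆ L := fun x hx => (hDsub hx).1.1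
        have hDB : D ⊆ Bij := fun x hx => (hDsub hx).1.2
        have hDRA : ∀ x ∈ D, x ∉ rSet H Bij ∪ A := fun x hx => (hDsub hx).2
        have hAL' : A ⊆ (L \ D) ∪ A := Set.subset_union_right
        have count_eq : ∀ T : Set V, Bij ⊆ T →
            (T ∩ ((L \ D) ∪ A)).ncard = (T ∩ L).ncard := by
          intro T hT
          have he : T ∩ ((L \ D) ∪ A) = ((T ∩ L) \ D) ∪ A := by
            ext x
            constructor
            · rintro ⟨hxT, ⟨hxL, hxD⟩ | hxA⟩
              · exact Or.inl ⟨⟨hxT, hxL⟩, hxD⟩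
              · exact Or.inr hxA
            · rintro (⟨⟨hxT, hxL⟩, hxD⟩ | hxA)
              · exact ⟨hxT, Or.inl ⟨hxL, hxD⟩⟩
              · exact ⟨hT (hAB hxA), Or.inr hxA⟩
          rw [he]
          have e1 : D ⊆ T ∩ L := fun x hx => ⟨hT (hDB hx), hDL hx⟩
          have e2 : ((T ∩ L) \ D).ncard + D.ncard = (T ∩ L).ncard := by
            rw [Set.ncard_diff e1 (Set.toFinite _)]
            exact Nat.sub_add_cancel (Set.ncard_le_ncard e1 (Set.toFinite _))
          have e3 : (((T ∩ L) \ D) ∪ A).ncard + ((((T ∩ L) \ D)) ∩ A).ncard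
              = ((T ∩ L) \ D).ncard + A.ncard :=
            Set.ncard_union_add_ncard_inter _ _ (Set.toFinite _) (Set.toFinite _)
          have e4 : ((T ∩ L) \ D) ∩ A = A ∩ L := by
            ext x
            constructor
            · rintro ⟨⟨⟨hxT, hxL⟩, _⟩, hxA⟩
              exact ⟨hxA, hxL⟩
            · rintro ⟨hxA, hxL⟩
              exact ⟨⟨⟨hT (hAB hxA), hxL⟩, fun hxD => hDRA x hxD (Or.inr hxA)⟩, hxA⟩
          have e5 : (A ∩ L).ncard + (A \ L).ncard = A.ncard :=
            Set.ncard_inter_add_ncard_diff_eq_ncard _ _ (Set.toFinite _)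
          rw [e4] at e3
          omega
        have hciL' : ci ∈ (L \ D) ∪ A := by
          rcases hciRA with h | h
          · exact Or.inl ⟨hrL h, fun hD => hDRA ci hD (Or.inl h)⟩
          · exact Or.inr h
        have count_le : ∀ T : Set V, (Bij ⊆ T ∨ T ∩ Bij ⊆ {ci}) →
            (T ∩ L).ncard ≤ (T ∩ ((L \ D) ∪ A)).ncard := by
          intro T hT
          rcases hT with hT | hT
          · exact le_of_eq (count_eq T hT).symm
          · apply Set.ncard_le_ncard _ (Set.toFinite _)
            rintro x ⟨hxT, hxL⟩
            by_cases hxD : x ∈ D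
            · have hxci : x = ci := hT ⟨hxT, hDB hxD⟩
              exact ⟨hxT, hxci ▸ hciL'⟩
            · exact ⟨hxT, Or.inl ⟨hxL, hxD⟩⟩
        refine ⟨(L \ D) ∪ A, ⟨?_, ?_, ?_, ?_⟩, ?_⟩
        · intro v hv
          rw [ht' v] at hv
          by_cases hvA : v ∈ A
          · exact hAL' hvA
          · rw [if_neg hvA] at hv
            refine Or.inl ⟨hL.1 v hv, fun hvD => ?_⟩
            exact hDRA v hvD (Or.inl ⟨hDB hvD, hv⟩)
        · intro v
          exact le_trans (hL.2.1 v) (count_le _ (dichV v))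
        · intro e he
          exact le_trans (hL.2.2.1 e he) (count_le _ (dichE e))
        · intro e he f hf hef
          refine le_trans (hL.2.2.2 e he f hf hef) (count_le _ ?_)
          rcases dichE e with h | h
          · exact Or.inl (h.trans Set.subset_union_left)
          · rcases dichE f with h2 | h2
            · exact Or.inl (h2.trans Set.subset_union_right)
            · right
              rintro x ⟨hx1 | hx1, hx2⟩
              · exact h ⟨hx1, hx2⟩
              · exact h2 ⟨hx1, hx2⟩
        · have hu := count_eq Set.univ (Set.subset_univ _)
          simpa using hu
      · -- A empty
        refine ⟨L, ⟨fun v hv => ?_, hL.2.1, hL.2.2.1, hL.2.2.2⟩, rfl⟩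
        rw [ht' v, if_neg (fun hvA => hAne ⟨v, hvA⟩)] at hv
        exact hL.1 v hv
    obtain ⟨L', hL', hc'⟩ := hsuff
    apply le_antisymm
    · have h1 : gam (relabelR H A) ∈ {n | ∃ L0 : Set V, IsMLVE (relabelR H A) L0 ∧ L0.ncard = n} :=
        Nat.sInf_mem ⟨L'.ncard, L', hL', rfl⟩
      obtain ⟨L2, hL2, hc2⟩ := h1
      exact Nat.sInf_le ⟨L2, mono L2 hL2, hc2⟩
    · calc gam (relabelR H A) ≤ L.ncard := Nat.sInf_le ⟨L', hL', hc'⟩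
        _ = gam H := hLcard
  · have hempty : {n | ∃ L : Set V, IsMLVE H L ∧ L.ncard = n} = ∅ :=
      Set.not_nonempty_iff_eq_empty.mp hSH
    have hempty' : {n | ∃ L : Set V, IsMLVE (relabelR H A) L ∧ L.ncard = n} = ∅ := by
      rw [Set.eq_empty_iff_forall_notMem]
      rintro n ⟨L, hL, hc⟩
      exact hSH ⟨n, L, mono L hL, hc⟩
    unfold gam
    rw [hempty, hempty']
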